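/- In the digraph D(A), for every (a, r) ∈ A × R, there is a homomorphism from the path Q = Q_∅ to the connecting path P_{(a,r)} , and for each i ∈ [k], there is a homomorphism from Q_{{i}} to P_{(a,r)} if and only if a = rᵢ. Consequently the set A is pp-definable in D(A) by the formula A = {x : ∃y (x →^Q y)}, and R is pp-definable by R = {(x₁,...,x_k) : ∃y (xᵢ →^{Q_{{i}}} y for all i ∈ [k])}. -/

import Mathlib

/-- The positions `i ∈ [k]` at which `a` equals the `i`-th entry of `r`. -/
def idxSet {A : Type} [DecidableEq A] {k : ℕ} (a : A) (r : Fin k → A) : Finset (Fin k) :=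
  Finset.univ.filter (fun i => a = r i)

/-- Direction pattern of the oriented path `Q_I`: a single edge, then for each
`l ∈ [k]` a single edge (if `l ∈ I`) or a zigzag (otherwise), then a single edge. -/
def qdirs {k : ℕ} (I : Finset (Fin k)) : List Bool :=
  [true] ++ ((List.finRange k).flatMap
    (fun l => if l ∈ I then [true] else [true, false, true])) ++ [true]

/-- Edge relation of the oriented path with direction pattern `ds`
(vertices are `0, 1, ..., ds.length`). -/
def pedge (ds : List Bool) (x y : ℕ) : Prop :=
  (y = x + 1 ∧ x < ds.length ∧ ds.getD x false = true) ∨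
  (x = y + 1 ∧ y < ds.length ∧ ds.getD y false = false)

/-- Number of edges of the connecting path `P_(a,r) = Q_{idxSet a r}`. -/
def plen {A : Type} [DecidableEq A] {k : ℕ} (a : A) (r : Fin k → A) : ℕ :=
  (qdirs (idxSet a r)).length

/-- Vertices of the digraph `D(A)` for the structure `(A; R)`. -/
inductive DVert {A : Type} [DecidableEq A] {k : ℕ} (R : Set (Fin k → A)) : Type where
  | base : A → DVert R
  | top : (r : Fin k → A) → r ∈ R → DVert R
  | inner : (a : A) → (r : Fin k → A) → r ∈ R → (j : ℕ) → 0 < j → j < plen a r → DVert R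

/-- `isAt v a r x` : vertex `v` of `D(A)` sits at position `x` of the connecting path
`P_(a,r)`. -/
def isAt {A : Type} [DecidableEq A] {k : ℕ} {R : Set (Fin k → A)} :
    DVert R → A → (Fin k → A) → ℕ → Prop
  | .base a', a, _, x => a' = a ∧ x = 0
  | .top r' _, a, r, x => r' = r ∧ x = plen a r
  | .inner a' r' _ j _ _, a, r, x => a' = a ∧ r' = r ∧ x = j

/-- The edge relation of the digraph `D(A)`. -/
def dedge {A : Type} [DecidableEq A] {k : ℕ} {R : Set (Fin k → A)}
    (u v : DVert R) : Prop :=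
  ∃ a r, r ∈ R ∧ ∃ x y, isAt u a r x ∧ isAt v a r y ∧
    pedge (qdirs (idxSet a r)) x y

/-- Height of position `x` along a path with direction pattern `ds`. -/
def phgt (ds : List Bool) (x : ℕ) : ℤ :=
  ((ds.take x).count true : ℤ) - ((ds.take x).count false : ℤ)

/-- The level function of the balanced digraph `D(A)`. -/
def lvlD {A : Type} [DecidableEq A] {k : ℕ} {R : Set (Fin k → A)} : DVert R → ℕ
  | .base _ => 0
  | .top _ _ => k + 2
  | .inner a r _ j _ _ => (phgt (qdirs (idxSet a r)) j).toNat

/-- `walkAlong ds u v` : one can walk in `D(A)` from `u` to `v` following the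
oriented path with direction pattern `ds` (i.e. there is a homomorphism of the path
into `D(A)` sending the initial vertex to `u` and the terminal vertex to `v`). -/
def walkAlong {A : Type} [DecidableEq A] {k : ℕ} {R : Set (Fin k → A)}
    (ds : List Bool) (u v : DVert R) : Prop :=
  ∃ φ : ℕ → DVert R, φ 0 = u ∧ φ ds.length = v ∧
    ∀ x < ds.length,
      (ds.getD x false = true → dedge (φ x) (φ (x + 1))) ∧
      (ds.getD x false = false → dedge (φ (x + 1)) (φ x))

namespace PPAux
open List

/-! ### Basic height lemmas -/

lemma phgt_zero (ds : List Bool) : phgt ds 0 = 0 := by simp [phgt]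

lemma phgt_succ (ds : List Bool) {x : ℕ} (hx : x < ds.length) :
    phgt ds (x + 1) = phgt ds x + (if ds.getD x false = true then 1 else -1) := by
  have h : ds.take (x+1) = ds.take x ++ [ds[x]] := by
    rw [List.take_succ]; simp [List.getElem?_eq_getElem hx]
  rw [List.getD_eq_getElem ds false hx]
  unfold phgt
  rw [h, List.count_append, List.count_append]
  cases hb : ds[x] <;> simp [hb] <;> ring

lemma phgt_append_left {xs ys : List Bool} {x : ℕ} (hx : x ≤ xs.length) :
    phgt (xs ++ ys) x = phgt xs x := by
  unfold phgt
  rw [List.take_append_of_le_length hx]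

lemma phgt_append_right (xs ys : List Bool) (n : ℕ) :
    phgt (xs ++ ys) (xs.length + n) = phgt xs xs.length + phgt ys n := by
  unfold phgt
  rw [List.take_length_add_append, List.count_append, List.count_append, List.take_length]
  push_cast; ring

/-! ### Blocks -/

/-- Position of the start of block `l` in the concatenation. -/
def pos (bl : List (List Bool)) (l : ℕ) : ℕ := ((bl.take l).flatten).length

/-- A good block: starts with `true`, total height 1, intermediate heights in `[0,1]`. -/
def GoodB (b : List Bool) : Prop :=
  b.getD 0 false = true ∧ phgt b b.length = 1 ∧ ∀ j, 0 ≤ phgt b j ∧ phgt b j ≤ 1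

lemma GoodB.ne_nil {b : List Bool} (hb : GoodB b) : 1 ≤ b.length := by
  rcases b with _ | ⟨x, t⟩
  · simpa [phgt] using hb.2.1
  · simp

lemma pos_zero (bl : List (List Bool)) : pos bl 0 = 0 := by simp [pos]

lemma pos_cons (b : List Bool) (bl : List (List Bool)) (l : ℕ) :
    pos (b :: bl) (l + 1) = b.length + pos bl l := by
  simp [pos]

lemma pos_succ (bl : List (List Bool)) {l : ℕ} (hl : l < bl.length) :
    pos bl (l + 1) = pos bl l + (bl.getD l []).length := by
  induction bl generalizing l with
  | nil => simp at hl
  | cons b bl ih =>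
    cases l with
    | zero => simp [pos]
    | succ l =>
      rw [pos_cons, pos_cons, ih (by simpa using hl)]
      simp [Nat.add_assoc]

lemma length_flatten_eq_pos (bl : List (List Bool)) : bl.flatten.length = pos bl bl.length := by
  simp [pos]

lemma pos_lt_pos {bl : List (List Bool)} (hg : ∀ b ∈ bl, GoodB b) {l m : ℕ}
    (h : l < m) (hm : m ≤ bl.length) : pos bl l < pos bl m := by
  induction bl generalizing l m with
  | nil => simp at hm; omega
  | cons b bl ih =>
    have hb1 : 1 ≤ b.length := (hg b (by simp)).ne_nil
    cases m with
    | zero => omega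
    | succ m =>
      cases l with
      | zero =>
        rw [pos_zero, pos_cons]
        have : pos bl m ≥ 0 := Nat.zero_le _
        omega
      | succ l =>
        rw [pos_cons, pos_cons]
        have := ih (l := l) (m := m) (fun x hx => hg x (by simp [hx])) (by omega) (by simpa using hm)
        omega

lemma le_pos {bl : List (List Bool)} (hg : ∀ b ∈ bl, GoodB b) {l : ℕ}
    (hl : l ≤ bl.length) : l ≤ pos bl l := by
  induction bl generalizing l with
  | nil =>
    have : l = 0 := by simpa using hl
    subst this; simp [pos]
  | cons b bl ih =>
    cases l with
    | zero => simp
    | succ l =>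
      rw [pos_cons]
      have hb1 : 1 ≤ b.length := (hg b (by simp)).ne_nil
      have := ih (fun x hx => hg x (by simp [hx])) (by simpa using hl)
      omega

/-- Height at a block boundary. -/
lemma phgt_pos {bl : List (List Bool)} (hg : ∀ b ∈ bl, GoodB b) {l : ℕ}
    (hl : l ≤ bl.length) : phgt bl.flatten (pos bl l) = l := by
  induction bl generalizing l with
  | nil =>
    have : l = 0 := by simpa using hl
    subst this; simp [pos, phgt]
  | cons b bl ih =>
    cases l with
    | zero => simp [pos_zero, phgt_zero]
    | succ l =>
      rw [pos_cons]
      have hgb := hg b (by simp)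
      have : (b :: bl).flatten = b ++ bl.flatten := by simp
      rw [this, phgt_append_right, hgb.2.1, ih (fun x hx => hg x (by simp [hx])) (by simpa using hl)]
      push_cast; ring

/-- Upper bound on heights before a block boundary. -/
lemma phgt_le_of_le_pos {bl : List (List Bool)} (hg : ∀ b ∈ bl, GoodB b) {l : ℕ}
    (hl : l ≤ bl.length) : ∀ j ≤ pos bl l, phgt bl.flatten j ≤ l := by
  induction bl generalizing l with
  | nil =>
    have : l = 0 := by simpa using hl
    subst this; intro j hj; simp [pos] at hj; simp [hj, phgt]
  | cons b bl ih =>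
    intro j hj
    cases l with
    | zero => simp [pos] at hj; simp [hj, phgt_zero]
    | succ l =>
      rw [pos_cons] at hj
      have hgb := hg b (by simp)
      have hfl : (b :: bl).flatten = b ++ bl.flatten := by simp
      rcases le_or_gt j b.length with hj' | hj'
      · rw [hfl, phgt_append_left hj']
        have := (hgb.2.2 j).2
        push_cast; omega
      · obtain ⟨n, rfl⟩ : ∃ n, j = b.length + n := ⟨j - b.length, by omega⟩
        rw [hfl, phgt_append_right, hgb.2.1]
        have := ih (fun x hx => hg x (by simp [hx])) (by simpa using hl) n (by omega)
        push_cast; omega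

/-- Lower bound on heights after a block boundary. -/
lemma le_phgt_of_pos_le {bl : List (List Bool)} (hg : ∀ b ∈ bl, GoodB b) {l : ℕ}
    (hl : l ≤ bl.length) : ∀ j, pos bl l ≤ j → j ≤ bl.flatten.length → (l : ℤ) ≤ phgt bl.flatten j := by
  induction bl generalizing l with
  | nil =>
    have : l = 0 := by simpa using hl
    subst this; intro j h1 h2; simp at h2; simp [h2, phgt]
  | cons b bl ih =>
    intro j h1 h2
    have hgb := hg b (by simp)
    have hfl : (b :: bl).flatten = b ++ bl.flatten := by simp
    have hlen : (b :: bl).flatten.length = b.length + bl.flatten.length := by simp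
    cases l with
    | zero =>
      rcases le_or_gt j b.length with hj' | hj'
      · rw [hfl, phgt_append_left hj']
        exact_mod_cast (hgb.2.2 j).1
      · obtain ⟨n, rfl⟩ : ∃ n, j = b.length + n := ⟨j - b.length, by omega⟩
        rw [hfl, phgt_append_right, hgb.2.1]
        have := ih (fun x hx => hg x (by simp [hx])) (Nat.zero_le _) n (by simp [pos]) (by omega)
        push_cast; omega
    | succ l =>
      rw [pos_cons] at h1
      obtain ⟨n, rfl⟩ : ∃ n, j = b.length + n := ⟨j - b.length, by omega⟩
      rw [hfl, phgt_append_right, hgb.2.1]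
      have := ih (fun x hx => hg x (by simp [hx])) (by simpa using hl) n (by omega) (by omega)
      push_cast; omega

/-- Content of block `l` inside the concatenation. -/
lemma getD_pos_add {bl : List (List Bool)} {l : ℕ} (hl : l < bl.length) :
    ∀ m < (bl.getD l []).length,
      bl.flatten.getD (pos bl l + m) false = (bl.getD l []).getD m false := by
  induction bl generalizing l with
  | nil => simp at hl
  | cons b bl ih =>
    intro m hm
    have hfl : (b :: bl).flatten = b ++ bl.flatten := by simp
    cases l with
    | zero =>
      simp only [pos_zero, Nat.zero_add]
      simp only [List.getD_cons_zero] at hm ⊢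
      rw [hfl, List.getD_append _ _ _ _ hm]
    | succ l =>
      rw [pos_cons, hfl, Nat.add_assoc, List.getD_append_right _ _ _ _ (by omega)]
      simp only [Nat.add_sub_cancel_left]  -- (b.length + x) - b.length
      have := ih (by simpa using hl) m (by simpa using hm)
      simpa using this

end PPAux
namespace PPAux
open List

lemma phgt_single_true : ∀ j, phgt [true] j = if j = 0 then 0 else 1 := by
  intro j
  match j with
  | 0 => simp [phgt]
  | (n+1) => simp [phgt, List.take_of_length_le (by simp : [true].length ≤ n+1)]

lemma goodB_single : GoodB [true] := by
  refine ⟨rfl, ?_, ?_⟩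
  · simp [phgt_single_true]
  · intro j; rw [phgt_single_true]; split <;> simp

lemma phgt_zigzag : ∀ j, phgt [true, false, true] j =
    if j = 0 then 0 else if j = 1 then 1 else if j = 2 then 0 else 1 := by
  intro j
  match j with
  | 0 => simp [phgt]
  | 1 => simp [phgt]
  | 2 => simp [phgt]
  | (n+3) =>
    have : ([true, false, true] : List Bool).take (n+3) = [true, false, true] :=
      List.take_of_length_le (by simp)
    simp [phgt, this]

lemma goodB_zigzag : GoodB [true, false, true] := by
  refine ⟨rfl, ?_, ?_⟩
  · simp [phgt_zigzag]
  · intro j; rw [phgt_zigzag]; split <;> [simp; split <;> [simp; split <;> simp]]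

/-- The block description of `qdirs I`. -/
def qbl {k : ℕ} (I : Finset (Fin k)) : List (List Bool) :=
  [true] :: (((List.finRange k).map
    (fun l => if l ∈ I then [true] else [true, false, true])) ++ [[true]])

lemma qdirs_eq_flatten {k : ℕ} (I : Finset (Fin k)) : qdirs I = (qbl I).flatten := by
  simp [qdirs, qbl, List.flatMap]

lemma qbl_good {k : ℕ} (I : Finset (Fin k)) : ∀ b ∈ qbl I, GoodB b := by
  intro b hb
  simp [qbl] at hb
  rcases hb with h | ⟨l, h⟩ | h
  · rw [h]; exact goodB_single
  · rw [← h]; split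
    · exact goodB_single
    · exact goodB_zigzag
  · rw [h]; exact goodB_single

lemma qbl_length {k : ℕ} (I : Finset (Fin k)) : (qbl I).length = k + 2 := by
  simp [qbl]

lemma qbl_getD_zero {k : ℕ} (I : Finset (Fin k)) : (qbl I).getD 0 [] = [true] := rfl

lemma qbl_getD_succ {k : ℕ} (I : Finset (Fin k)) {l : ℕ} (hl : l < k) :
    (qbl I).getD (l + 1) [] = (if (⟨l, hl⟩ : Fin k) ∈ I then [true] else [true, false, true]) := by
  have h1 : l < ((List.finRange k).map
      (fun l => if l ∈ I then [true] else [true, false, true])).length := by simp [hl]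
  simp only [qbl, List.getD_cons_succ]
  rw [List.getD_append _ _ _ _ h1, List.getD_eq_getElem _ _ h1]
  simp [List.getElem_finRange, Fin.cast]

lemma qbl_getD_last {k : ℕ} (I : Finset (Fin k)) : (qbl I).getD (k + 1) [] = [true] := by
  simp only [qbl, List.getD_cons_succ]
  rw [List.getD_append_right _ _ _ _ (by simp)]
  simp

/-- Length of `qdirs I` equals the last block boundary. -/
lemma qdirs_length {k : ℕ} (I : Finset (Fin k)) :
    (qdirs I).length = pos (qbl I) (k + 2) := by
  rw [qdirs_eq_flatten, length_flatten_eq_pos, qbl_length]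

lemma qdirs_length_pos_succ {k : ℕ} (I : Finset (Fin k)) :
    (qdirs I).length = pos (qbl I) (k + 1) + 1 := by
  rw [qdirs_length, pos_succ _ (by simp [qbl_length]), qbl_getD_last]
  simp

/-- Height at the end of `qdirs I` is `k+2`. -/
lemma phgt_qdirs_length {k : ℕ} (I : Finset (Fin k)) :
    phgt (qdirs I) ((qdirs I).length) = (k : ℤ) + 2 := by
  rw [qdirs_length, qdirs_eq_flatten]
  have := phgt_pos (qbl_good I) (l := k + 2) (by simp [qbl_length])
  rw [this]; push_cast; ring

lemma phgt_qdirs_le {k : ℕ} (I : Finset (Fin k)) {l : ℕ} (hl : l ≤ k + 2) :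
    ∀ j ≤ pos (qbl I) l, phgt (qdirs I) j ≤ l := by
  rw [qdirs_eq_flatten]
  exact phgt_le_of_le_pos (qbl_good I) (by simp [qbl_length, hl])

lemma le_phgt_qdirs {k : ℕ} (I : Finset (Fin k)) {l : ℕ} (hl : l ≤ k + 2) :
    ∀ j, pos (qbl I) l ≤ j → j ≤ (qdirs I).length → (l : ℤ) ≤ phgt (qdirs I) j := by
  rw [qdirs_eq_flatten, length_flatten_eq_pos, qbl_length]
  intro j h1 h2
  exact le_phgt_of_pos_le (qbl_good I) (by simp [qbl_length, hl]) j h1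
    (by rw [length_flatten_eq_pos, qbl_length]; exact h2)

lemma phgt_qdirs_pos {k : ℕ} (I : Finset (Fin k)) {l : ℕ} (hl : l ≤ k + 2) :
    phgt (qdirs I) (pos (qbl I) l) = l := by
  rw [qdirs_eq_flatten]
  exact phgt_pos (qbl_good I) (by simp [qbl_length, hl])

lemma qdirs_getD {k : ℕ} (I : Finset (Fin k)) {l : ℕ} (hl : l < k + 2) :
    ∀ m < ((qbl I).getD l []).length,
      (qdirs I).getD (pos (qbl I) l + m) false = ((qbl I).getD l []).getD m false := by
  rw [qdirs_eq_flatten]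
  exact getD_pos_add (by simp [qbl_length, hl])

/-- `phgt` nonneg on `qdirs`. -/
lemma phgt_qdirs_nonneg {k : ℕ} (I : Finset (Fin k)) {j : ℕ} (hj : j ≤ (qdirs I).length) :
    0 ≤ phgt (qdirs I) j := by
  have := le_phgt_qdirs I (l := 0) (by omega) j (by simp [pos_zero]) hj
  simpa using this

lemma one_le_phgt_qdirs {k : ℕ} (I : Finset (Fin k)) {j : ℕ} (h0 : 0 < j)
    (hj : j ≤ (qdirs I).length) : 1 ≤ phgt (qdirs I) j := by
  have h1 : pos (qbl I) 1 = 1 := by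
    rw [pos_succ _ (by simp [qbl_length]), pos_zero, qbl_getD_zero]; simp
  have := le_phgt_qdirs I (l := 1) (by omega) j (by omega) hj
  simpa using this

lemma phgt_qdirs_le_k1 {k : ℕ} (I : Finset (Fin k)) {j : ℕ} (hj : j < (qdirs I).length) :
    phgt (qdirs I) j ≤ (k : ℤ) + 1 := by
  have hj' : j ≤ pos (qbl I) (k + 1) := by
    have := qdirs_length_pos_succ I; omega
  have := phgt_qdirs_le I (l := k + 1) (by omega) j hj'
  push_cast at this ⊢; omega

lemma qdirs_getD_zero {k : ℕ} (I : Finset (Fin k)) : (qdirs I).getD 0 false = true := by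
  have h := qdirs_getD I (l := 0) (by omega) 0 (by rw [qbl_getD_zero]; norm_num)
  exact h

lemma qdirs_getD_last {k : ℕ} (I : Finset (Fin k)) :
    (qdirs I).getD (pos (qbl I) (k + 1)) false = true := by
  have h := qdirs_getD I (l := k + 1) (by omega) 0 (by rw [qbl_getD_last]; norm_num)
  rw [qbl_getD_last, Nat.add_zero] at h
  exact h

end PPAux
namespace PPAux
open List

variable {A : Type} [DecidableEq A] {k : ℕ} {R : Set (Fin k → A)}

lemma pedge_le {ds : List Bool} {x y : ℕ} (h : pedge ds x y) :
    x ≤ ds.length ∧ y ≤ ds.length := by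
  rcases h with ⟨h1, h2, _⟩ | ⟨h1, h2, _⟩ <;> omega

lemma pedge_hgt {ds : List Bool} {x y : ℕ} (h : pedge ds x y) :
    phgt ds y = phgt ds x + 1 := by
  rcases h with ⟨h1, h2, h3⟩ | ⟨h1, h2, h3⟩
  · subst h1; rw [phgt_succ ds h2, h3]; norm_num
  · subst h1; rw [phgt_succ ds h2, h3]; norm_num

lemma pedge_dist {ds : List Bool} {x y : ℕ} (h : pedge ds x y) :
    y = x + 1 ∨ x = y + 1 := by
  rcases h with ⟨h1, _, _⟩ | ⟨h1, _, _⟩ <;> omega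

lemma plen_pos (a : A) (r : Fin k → A) : 0 < plen a r := by
  simp [plen, qdirs]

lemma isAt_lvl {u : DVert R} {a : A} {r : Fin k → A} {x : ℕ}
    (h : isAt u a r x) (hx : x ≤ plen a r) :
    (lvlD u : ℤ) = phgt (qdirs (idxSet a r)) x := by
  cases u with
  | base a' =>
    obtain ⟨rfl, rfl⟩ := h
    simp [lvlD, phgt_zero]
  | top r' hr' =>
    obtain ⟨rfl, rfl⟩ := h
    have := phgt_qdirs_length (idxSet a r')
    simp only [lvlD]
    rw [show plen a r' = (qdirs (idxSet a r')).length from rfl, this]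
    push_cast; ring
  | inner a' r' hr' j h1 h2 =>
    obtain ⟨rfl, rfl, rfl⟩ := h
    simp only [lvlD]
    rw [Int.toNat_of_nonneg (phgt_qdirs_nonneg _ (le_of_lt h2))]

lemma dedge_lvl {u v : DVert R} (h : dedge u v) : (lvlD v : ℤ) = lvlD u + 1 := by
  obtain ⟨a, r, hr, x, y, h1, h2, hp⟩ := h
  have hb := pedge_le hp
  rw [isAt_lvl h2 hb.2, isAt_lvl h1 hb.1, pedge_hgt hp]

lemma lvlD_le (v : DVert R) : lvlD v ≤ k + 2 := by
  cases v with
  | base a => simp [lvlD]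
  | top r hr => simp [lvlD]
  | inner a r hr j h1 h2 =>
    simp only [lvlD]
    have := phgt_qdirs_le_k1 (idxSet a r) (j := j) h2
    omega

lemma lvlD_eq_zero {v : DVert R} (h : lvlD v = 0) : ∃ a, v = DVert.base a := by
  cases v with
  | base a => exact ⟨a, rfl⟩
  | top r hr => simp [lvlD] at h
  | inner a r hr j h1 h2 =>
    exfalso
    simp only [lvlD] at h
    have := one_le_phgt_qdirs (idxSet a r) h1 (le_of_lt h2)
    omega

lemma lvlD_eq_top {v : DVert R} (h : lvlD v = k + 2) : ∃ r hr, v = DVert.top r hr := by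
  cases v with
  | base a => simp [lvlD] at h
  | top r hr => exact ⟨r, hr, rfl⟩
  | inner a r hr j h1 h2 =>
    exfalso
    simp only [lvlD] at h
    have := phgt_qdirs_le_k1 (idxSet a r) (j := j) h2
    omega

/-- Levels along a walk. -/
lemma walk_lvl {ds : List Bool} {φ : ℕ → DVert R}
    (hstep : ∀ x < ds.length,
      (ds.getD x false = true → dedge (φ x) (φ (x + 1))) ∧
      (ds.getD x false = false → dedge (φ (x + 1)) (φ x))) :
    ∀ x ≤ ds.length, (lvlD (φ x) : ℤ) = lvlD (φ 0) + phgt ds x := by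
  intro x hx
  induction x with
  | zero => simp [phgt_zero]
  | succ x ih =>
    have hx' : x < ds.length := by omega
    have hih := ih (by omega)
    rw [phgt_succ ds hx']
    cases hb : ds.getD x false with
    | true =>
      have := dedge_lvl ((hstep x hx').1 hb)
      rw [this, hih]; simp [hb]; ring
    | false =>
      have := dedge_lvl ((hstep x hx').2 hb)
      rw [hih] at this
      simp [hb]; omega

lemma walkAlong_lvl {ds : List Bool} {u v : DVert R} (h : walkAlong ds u v) :
    (lvlD v : ℤ) = lvlD u + phgt ds ds.length := by
  obtain ⟨φ, h0, h1, hstep⟩ := h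
  have := walk_lvl hstep ds.length le_rfl
  rw [h0, h1] at this
  exact this

/-! ### Building walks inside a connecting path -/

/-- The vertex of `D(A)` at position `j` of the connecting path `P_(a,r)`. -/
def vtx (a : A) (r : Fin k → A) (hr : r ∈ R) (j : ℕ) : DVert R :=
  if h0 : j = 0 then DVert.base a
  else if h : j < plen a r then DVert.inner a r hr j (Nat.pos_of_ne_zero h0) h
  else DVert.top r hr

lemma vtx_zero (a : A) (r : Fin k → A) (hr : r ∈ R) : vtx (R := R) a r hr 0 = DVert.base a := by
  simp [vtx]

lemma vtx_last (a : A) (r : Fin k → A) (hr : r ∈ R) :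
    vtx (R := R) a r hr (plen a r) = DVert.top r hr := by
  have := plen_pos a r
  simp [vtx]
  omega

lemma vtx_isAt (a : A) (r : Fin k → A) (hr : r ∈ R) {j : ℕ} (hj : j ≤ plen a r) :
    isAt (vtx (R := R) a r hr j) a r j := by
  unfold vtx
  split
  · subst ‹j = 0›; exact ⟨rfl, rfl⟩
  · split
    · exact ⟨rfl, rfl, rfl⟩
    · exact ⟨rfl, by omega⟩

lemma pedge_dedge (a : A) (r : Fin k → A) (hr : r ∈ R) {x y : ℕ}
    (h : pedge (qdirs (idxSet a r)) x y) :
    dedge (vtx (R := R) a r hr x) (vtx (R := R) a r hr y) := by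
  have hb := pedge_le h
  exact ⟨a, r, hr, x, y, vtx_isAt a r hr hb.1, vtx_isAt a r hr hb.2, h⟩

/-- A walk in position space along the connecting path `P_(a,r)`. -/
def Trav {A : Type} [DecidableEq A] {k : ℕ} (a : A) (r : Fin k → A)
    (ds : List Bool) (j j' : ℕ) : Prop :=
  ∃ σ : ℕ → ℕ, σ 0 = j ∧ σ ds.length = j' ∧
    ∀ x < ds.length,
      (ds.getD x false = true → pedge (qdirs (idxSet a r)) (σ x) (σ (x + 1))) ∧
      (ds.getD x false = false → pedge (qdirs (idxSet a r)) (σ (x + 1)) (σ x))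

lemma Trav.walk {a : A} {r : Fin k → A} (hr : r ∈ R) {ds : List Bool} {j j' : ℕ}
    (h : Trav a r ds j j') :
    walkAlong ds (vtx (R := R) a r hr j) (vtx (R := R) a r hr j') := by
  obtain ⟨σ, h0, h1, hstep⟩ := h
  refine ⟨fun x => vtx a r hr (σ x), by simp [h0], by simp [h1], ?_⟩
  intro x hx
  exact ⟨fun hb => pedge_dedge a r hr ((hstep x hx).1 hb),
         fun hb => pedge_dedge a r hr ((hstep x hx).2 hb)⟩

lemma Trav.append {a : A} {r : Fin k → A} {ds1 ds2 : List Bool} {j j' j'' : ℕ}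
    (h1 : Trav a r ds1 j j') (h2 : Trav a r ds2 j' j'') :
    Trav a r (ds1 ++ ds2) j j'' := by
  obtain ⟨σ1, e0, e1, s1⟩ := h1
  obtain ⟨σ2, f0, f1, s2⟩ := h2
  refine ⟨fun x => if x < ds1.length then σ1 x else σ2 (x - ds1.length), ?_, ?_, ?_⟩
  · by_cases h : 0 < ds1.length
    · simp [h, e0]
    · have : ds1.length = 0 := by omega
      simp [this, f0, ← e1, this, e0]
  · have : ¬ (ds1.length + ds2.length < ds1.length) := by omega
    simp [this, f1]
  · intro x hx
    simp only [List.length_append] at hx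
    rcases lt_or_ge x ds1.length with hlt | hge
    · have hgd : (ds1 ++ ds2).getD x false = ds1.getD x false :=
        List.getD_append _ _ _ _ hlt
      have hσ1 : (if x < ds1.length then σ1 x else σ2 (x - ds1.length)) = σ1 x := by
        simp [hlt]
      have hσ2 : (if x + 1 < ds1.length then σ1 (x+1) else σ2 (x + 1 - ds1.length)) = σ1 (x+1) := by
        by_cases h : x + 1 < ds1.length
        · simp [h]
        · have hx1 : x + 1 = ds1.length := by omega
          simp [h, hx1, f0, ← e1]
      rw [hgd]
      constructor
      · intro hb; beta_reduce; rw [hσ1, hσ2]; exact (s1 x hlt).1 hb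
      · intro hb; beta_reduce; rw [hσ1, hσ2]; exact (s1 x hlt).2 hb
    · obtain ⟨n, rfl⟩ : ∃ n, x = ds1.length + n := ⟨x - ds1.length, by omega⟩
      have hn : n < ds2.length := by omega
      have hgd : (ds1 ++ ds2).getD (ds1.length + n) false = ds2.getD n false := by
        rw [List.getD_append_right _ _ _ _ (by omega)]
        simp
      have hσ1 : (if ds1.length + n < ds1.length then σ1 (ds1.length + n)
          else σ2 (ds1.length + n - ds1.length)) = σ2 n := by simp
      have hσ2 : (if ds1.length + n + 1 < ds1.length then σ1 (ds1.length + n + 1)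
          else σ2 (ds1.length + n + 1 - ds1.length)) = σ2 (n + 1) := by
        have : ¬ (ds1.length + n + 1 < ds1.length) := by omega
        simp only [this, if_false]
        congr 1
        omega
      rw [hgd]
      constructor
      · intro hb; beta_reduce; rw [hσ1, hσ2]; exact (s2 n hn).1 hb
      · intro hb; beta_reduce; rw [hσ1, hσ2]; exact (s2 n hn).2 hb

end PPAux
namespace PPAux
open List

variable {A : Type} [DecidableEq A] {k : ℕ} {R : Set (Fin k → A)}

lemma trav_single {a : A} {r : Fin k → A} {j : ℕ}
    (hlen : j < (qdirs (idxSet a r)).length)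
    (hj : (qdirs (idxSet a r)).getD j false = true) :
    Trav a r [true] j (j + 1) := by
  refine ⟨fun x => j + min x 1, by simp, by simp, ?_⟩
  intro x hx
  have hx0 : x = 0 := by simpa using hx
  subst hx0
  exact ⟨fun _ => Or.inl ⟨by simp, hlen, hj⟩, fun hb => by simp at hb⟩

lemma trav_tft_collapse {a : A} {r : Fin k → A} {j : ℕ}
    (hlen : j < (qdirs (idxSet a r)).length)
    (hj : (qdirs (idxSet a r)).getD j false = true) :
    Trav a r [true, false, true] j (j + 1) := by
  have hped : pedge (qdirs (idxSet a r)) j (j + 1) := Or.inl ⟨rfl, hlen, hj⟩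
  refine ⟨fun x => j + x % 2, by simp, by simp, ?_⟩
  intro x hx
  simp at hx
  interval_cases x
  · exact ⟨fun _ => hped, fun hb => by simp at hb⟩
  · exact ⟨fun hb => by simp at hb, fun _ => hped⟩
  · exact ⟨fun _ => hped, fun hb => by simp at hb⟩

lemma trav_tft_straight {a : A} {r : Fin k → A} {j : ℕ}
    (hlen : j + 2 < (qdirs (idxSet a r)).length)
    (h0 : (qdirs (idxSet a r)).getD j false = true)
    (h1 : (qdirs (idxSet a r)).getD (j + 1) false = false)
    (h2 : (qdirs (idxSet a r)).getD (j + 2) false = true) :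
    Trav a r [true, false, true] j (j + 3) := by
  refine ⟨fun x => j + min x 3, by simp, by simp, ?_⟩
  intro x hx
  simp at hx
  interval_cases x
  · exact ⟨fun _ => (Or.inl ⟨rfl, by omega, h0⟩ :
      pedge (qdirs (idxSet a r)) j (j+1)), fun hb => by simp at hb⟩
  · exact ⟨fun hb => by simp at hb, fun _ =>
      (Or.inr ⟨rfl, by omega, h1⟩ : pedge (qdirs (idxSet a r)) (j+2) (j+1))⟩
  · exact ⟨fun _ =>
      (Or.inl ⟨rfl, by omega, h2⟩ : pedge (qdirs (idxSet a r)) (j+2) (j+3)),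
      fun hb => by simp at hb⟩

lemma getD_of_drop {P : List Bool} {j : ℕ} {pre rest : List Bool}
    (h : P.drop j = pre ++ rest) :
    ∀ m < pre.length, j + m < P.length ∧ P.getD (j + m) false = pre.getD m false := by
  intro m hm
  have hlen : P.length - j = pre.length + rest.length := by
    rw [← List.length_drop, h, List.length_append]
  have hjm : j + m < P.length := by omega
  constructor
  · exact hjm
  · have hmd : m < (P.drop j).length := by rw [List.length_drop]; omega
    have e1 : P.getD (j + m) false = (P.drop j).getD m false := by
      rw [List.getD_eq_getElem _ _ hjm, List.getD_eq_getElem _ _ hmd,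
        List.getElem_drop]
    rw [e1, h]
    exact List.getD_append _ _ _ _ hm

/-- Walking a body of blocks: `Q_I`'s blocks over `L` map into `P`'s blocks over `L`. -/
lemma trav_body {a : A} {r : Fin k → A} {I : Finset (Fin k)} (hIJ : I ⊆ idxSet a r) :
    ∀ (L : List (Fin k)) (j : ℕ) (suffix : List Bool),
      (qdirs (idxSet a r)).drop j =
        (L.flatMap (fun l => if l ∈ idxSet a r then [true] else [true, false, true])) ++ suffix →
      Trav a r (L.flatMap (fun l => if l ∈ I then [true] else [true, false, true])) j
        (j + (L.flatMap (fun l => if l ∈ idxSet a r then [true] else [true, false, true])).length) := by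
  intro L
  induction L with
  | nil =>
    intro j suffix h
    exact ⟨fun _ => j, rfl, by simp, by simp⟩
  | cons l L ih =>
    intro j suffix h
    rw [List.flatMap_cons] at h ⊢
    rw [List.append_assoc] at h
    set gJl := (if l ∈ idxSet a r then [true] else [true, false, true]) with hgJl
    have hstep1 : Trav a r (if l ∈ I then [true] else [true, false, true]) j (j + gJl.length) := by
      by_cases hlJ : l ∈ idxSet a r
      · have hgJ : gJl = [true] := by simp [hgJl, hlJ]
        have hd := getD_of_drop h 0 (by simp [hgJ])
        rw [hgJ] at hd ⊢
        simp only [Nat.add_zero] at hd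
        have hdj : (qdirs (idxSet a r)).getD j false = true := hd.2
        by_cases hlI : l ∈ I
        · rw [if_pos hlI]
          simpa using trav_single hd.1 hdj
        · rw [if_neg hlI]
          simpa using trav_tft_collapse hd.1 hdj
      · have hlI : l ∉ I := fun hx => hlJ (hIJ hx)
        have hgJ : gJl = [true, false, true] := by simp [hgJl, hlJ]
        rw [if_neg hlI, hgJ]
        rw [hgJ] at h
        have hd0 := getD_of_drop h 0 (by simp)
        have hd1 := getD_of_drop h 1 (by simp)
        have hd2 := getD_of_drop h 2 (by simp)
        simp only [Nat.add_zero] at hd0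
        have e0 : (qdirs (idxSet a r)).getD j false = true := hd0.2
        have e1 : (qdirs (idxSet a r)).getD (j + 1) false = false := hd1.2
        have e2 : (qdirs (idxSet a r)).getD (j + 2) false = true := hd2.2
        simpa using trav_tft_straight hd2.1 e0 e1 e2
    have hdrop : (qdirs (idxSet a r)).drop (j + gJl.length) =
        (L.flatMap (fun l => if l ∈ idxSet a r then [true] else [true, false, true])) ++ suffix := by
      have : (qdirs (idxSet a r)).drop (j + gJl.length) =
          ((qdirs (idxSet a r)).drop j).drop gJl.length := by
        conv_rhs => rw [List.drop_drop]
      rw [this, h, List.drop_left]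
    have hstep2 := ih (j + gJl.length) suffix hdrop
    have := hstep1.append hstep2
    simpa [List.length_append, Nat.add_assoc] using this

/-- The main building lemma: if `I ⊆ idxSet a r` then one can walk along `Q_I`
from `base a` to `top r`. -/
lemma build {a : A} {r : Fin k → A} (hr : r ∈ R) {I : Finset (Fin k)}
    (hIJ : I ⊆ idxSet a r) :
    walkAlong (qdirs I) (DVert.base a : DVert R) (DVert.top r hr) := by
  set J := idxSet a r with hJ
  set bodyJ := (List.finRange k).flatMap
    (fun l => if l ∈ J then [true] else [true, false, true]) with hbodyJ
  have hqd : qdirs J = [true] ++ bodyJ ++ [true] := rfl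
  have t1 : Trav a r [true] 0 1 := by
    refine trav_single ?_ ?_
    · exact plen_pos a r
    · exact qdirs_getD_zero J
  have hdrop1 : (qdirs J).drop 1 = bodyJ ++ [true] := by
    rw [hqd]; rfl
  have t2 := trav_body (a := a) (r := r) hIJ (List.finRange k) 1 [true] hdrop1
  have hdrop2 : (qdirs J).drop (1 + bodyJ.length) = [true] := by
    have hq2 : qdirs J = true :: (bodyJ ++ [true]) := hqd
    rw [hq2, show (1 + bodyJ.length) = bodyJ.length + 1 from by omega,
      List.drop_succ_cons]
    exact List.drop_left
  have hd := getD_of_drop (show (qdirs J).drop (1 + bodyJ.length) = [true] ++ [] from by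
    simpa using hdrop2) 0 (by simp)
  simp only [Nat.add_zero] at hd
  have t3 : Trav a r [true] (1 + bodyJ.length) (1 + bodyJ.length + 1) :=
    trav_single hd.1 hd.2
  have tall := (t1.append t2).append t3
  have hw := tall.walk hr
  rw [vtx_zero] at hw
  have hplen : plen a r = 1 + bodyJ.length + 1 := by
    simp only [plen, ← hJ, hqd, List.length_append, List.length_cons,
      List.length_nil]
  rw [show (1 : ℕ) + bodyJ.length + 1 = plen a r from hplen.symm, vtx_last] at hw
  exact hw

end PPAux
namespace PPAux
open List

variable {A : Type} [DecidableEq A] {k : ℕ} {R : Set (Fin k → A)}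

lemma isAt_unique {u : DVert R} {a : A} {r : Fin k → A} {x y : ℕ}
    (h1 : isAt u a r x) (h2 : isAt u a r y) : x = y := by
  cases u with
  | base a' => obtain ⟨_, rfl⟩ := h1; obtain ⟨_, rfl⟩ := h2; rfl
  | top r' hr' => obtain ⟨_, rfl⟩ := h1; obtain ⟨_, rfl⟩ := h2; rfl
  | inner a' r' hr' j ha hb => obtain ⟨_, _, rfl⟩ := h1; obtain ⟨_, _, rfl⟩ := h2; rfl

/-- The cut argument : no walk along `Q_{i}` can map onto `P_(a,r)` when `i ∉ idxSet a r`. -/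
lemma cut {a : A} {r : Fin k → A} {i : Fin k} (hiJ : i ∉ idxSet a r)
    {ψ : ℕ → ℕ} (h0 : ψ 0 = 0)
    (hend : ψ ((qdirs ({i} : Finset (Fin k))).length) = (qdirs (idxSet a r)).length)
    (hstep : ∀ x < (qdirs ({i} : Finset (Fin k))).length,
      ((qdirs ({i} : Finset (Fin k))).getD x false = true →
        pedge (qdirs (idxSet a r)) (ψ x) (ψ (x + 1))) ∧
      ((qdirs ({i} : Finset (Fin k))).getD x false = false →
        pedge (qdirs (idxSet a r)) (ψ (x + 1)) (ψ x))) : False := by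
  have hik : (i : ℕ) < k := i.isLt
  set Q := qdirs ({i} : Finset (Fin k)) with hQdef
  set P := qdirs (idxSet a r) with hPdef
  set n := Q.length with hndef
  set L := P.length with hLdef
  -- Q block facts
  have hQblock : (qbl ({i} : Finset (Fin k))).getD ((i : ℕ) + 1) [] = [true] := by
    rw [qbl_getD_succ _ hik]
    simp
  set p := pos (qbl ({i} : Finset (Fin k))) ((i : ℕ) + 1) with hpdef
  have hp1 : pos (qbl ({i} : Finset (Fin k))) ((i : ℕ) + 2) = p + 1 := by
    rw [show (i : ℕ) + 2 = ((i : ℕ) + 1) + 1 from rfl,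
      pos_succ _ (by rw [qbl_length]; omega), hQblock]
    simp [hpdef]
  have hn : n = pos (qbl ({i} : Finset (Fin k))) (k + 2) := qdirs_length _
  have hpn : p + 1 < n := by
    rw [hn, ← hp1]
    exact pos_lt_pos (qbl_good _) (by omega) (by rw [qbl_length])
  have hp_ge : 1 ≤ p := by
    have := le_pos (qbl_good ({i} : Finset (Fin k))) (l := (i : ℕ) + 1) (by rw [qbl_length]; omega)
    omega
  have hQp : Q.getD p false = true := by
    have h := qdirs_getD ({i} : Finset (Fin k)) (l := (i : ℕ) + 1) (by omega) 0
      (by rw [hQblock]; norm_num)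
    rw [hQblock, Nat.add_zero] at h
    exact h
  have hQlo : ∀ x ≤ p, phgt Q x ≤ (i : ℤ) + 1 := by
    intro x hx
    have := phgt_qdirs_le ({i} : Finset (Fin k)) (l := (i : ℕ) + 1) (by omega) x hx
    rw [← hQdef] at this
    push_cast at this ⊢; omega
  have hQhi : ∀ x, p + 1 ≤ x → x ≤ n → (i : ℤ) + 2 ≤ phgt Q x := by
    intro x hx1 hx2
    have := le_phgt_qdirs ({i} : Finset (Fin k)) (l := (i : ℕ) + 2) (by omega) x
      (by rw [hp1]; omega) (by rw [← hn] at *; exact hx2)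
    rw [← hQdef] at this
    push_cast at this ⊢; omega
  -- P block facts
  have hPblock : (qbl (idxSet a r)).getD ((i : ℕ) + 1) [] = [true, false, true] := by
    rw [qbl_getD_succ _ hik]
    simp [hiJ]
  set q := pos (qbl (idxSet a r)) ((i : ℕ) + 1) with hqdef
  have hq3 : pos (qbl (idxSet a r)) ((i : ℕ) + 2) = q + 3 := by
    rw [show (i : ℕ) + 2 = ((i : ℕ) + 1) + 1 from rfl,
      pos_succ _ (by rw [qbl_length]; omega), hPblock]
    simp [hqdef]
  have hL : L = pos (qbl (idxSet a r)) (k + 2) := qdirs_length _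
  have hqL : q + 3 < L := by
    rw [hL, ← hq3]
    exact pos_lt_pos (qbl_good _) (by omega) (by rw [qbl_length])
  have hP0 : P.getD q false = true := by
    have h := qdirs_getD (idxSet a r) (l := (i : ℕ) + 1) (by omega) 0
      (by rw [hPblock]; norm_num)
    rw [hPblock, Nat.add_zero] at h
    exact h
  have hPg1 : P.getD (q + 1) false = false := by
    have h := qdirs_getD (idxSet a r) (l := (i : ℕ) + 1) (by omega) 1
      (by rw [hPblock]; norm_num)
    rw [hPblock] at h
    exact h
  have hPq : phgt P q = (i : ℤ) + 1 := by
    have := phgt_qdirs_pos (idxSet a r) (l := (i : ℕ) + 1) (by omega)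
    rw [← hqdef, ← hPdef] at this
    push_cast at this ⊢; omega
  have hPq1 : phgt P (q + 1) = (i : ℤ) + 2 := by
    rw [phgt_succ P (by omega), hP0, hPq]; norm_num; omega
  have hPq2 : phgt P (q + 2) = (i : ℤ) + 1 := by
    rw [phgt_succ P (by omega), hPg1, hPq1]; norm_num; omega
  have hhigh : ∀ j' ≤ L, (i : ℤ) + 2 ≤ phgt P j' → j' = q + 1 ∨ q + 3 ≤ j' := by
    intro j' hj' hh
    by_contra hcon
    push_neg at hcon
    have hcase : j' ≤ q ∨ j' = q + 2 := by omega
    rcases hcase with hc | hc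
    · have := phgt_qdirs_le (idxSet a r) (l := (i : ℕ) + 1) (by omega) j' hc
      rw [← hPdef] at this
      push_cast at this; omega
    · rw [hc, hPq2] at hh; omega
  have hlow : ∀ j' ≤ L, phgt P j' ≤ (i : ℤ) + 1 → j' ≤ q ∨ j' = q + 2 := by
    intro j' hj' hh
    by_contra hcon
    push_neg at hcon
    have hcase : j' = q + 1 ∨ q + 3 ≤ j' := by omega
    rcases hcase with hc | hc
    · rw [hc, hPq1] at hh; omega
    · have := le_phgt_qdirs (idxSet a r) (l := (i : ℕ) + 2) (by omega) j'
        (by rw [hq3]; omega) hj'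
      rw [← hPdef] at this
      push_cast at this; omega
  -- walk facts
  have hedge : ∀ x < n, pedge P (ψ x) (ψ (x + 1)) ∨ pedge P (ψ (x + 1)) (ψ x) := by
    intro x hx
    cases hb : Q.getD x false with
    | true => exact Or.inl ((hstep x hx).1 hb)
    | false => exact Or.inr ((hstep x hx).2 hb)
  have hψle : ∀ x ≤ n, ψ x ≤ L := by
    intro x hx
    rcases eq_or_lt_of_le hx with hx' | hx'
    · rw [hx', hend]
    · rcases hedge x hx' with hp' | hp'
      · exact (pedge_le hp').1
      · exact (pedge_le hp').2
  have hpres : ∀ x ≤ n, phgt P (ψ x) = phgt Q x := by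
    intro x hx
    induction x with
    | zero => rw [h0, phgt_zero, phgt_zero]
    | succ x ih =>
      have hx' : x < n := by omega
      have hihx := ih (by omega)
      cases hb : Q.getD x false with
      | true =>
        have := pedge_hgt ((hstep x hx').1 hb)
        rw [this, hihx, phgt_succ Q hx', hb]
        norm_num
      | false =>
        have := pedge_hgt ((hstep x hx').2 hb)
        rw [phgt_succ Q hx', hb]
        norm_num
        omega
  -- the contradiction
  have hs := (hstep p (by omega)).1 hQp
  have hm1 : ψ (p + 1) = q + 1 ∨ q + 3 ≤ ψ (p + 1) := by
    refine hhigh _ (hψle _ (by omega)) ?_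
    rw [hpres _ (by omega)]
    exact hQhi (p + 1) le_rfl (by omega)
  have hm0 : ψ p ≤ q ∨ ψ p = q + 2 := by
    refine hlow _ (hψle _ (by omega)) ?_
    rw [hpres _ (by omega)]
    exact hQlo p le_rfl
  have hd01 := pedge_dist hs
  rcases hm1 with hc | hc
  · -- ψ(p+1) = q+1 : look at step p+1
    have hm2 : ψ (p + 2) = q + 1 ∨ q + 3 ≤ ψ (p + 2) := by
      refine hhigh _ (hψle _ (by omega)) ?_
      rw [hpres _ (by omega)]
      exact hQhi (p + 2) (by omega) (by omega)
    have hd12 : ψ (p + 2) = ψ (p + 1) + 1 ∨ ψ (p + 1) = ψ (p + 2) + 1 := by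
      rcases hedge (p + 1) (by omega) with hp' | hp'
      · have := pedge_dist hp'
        rw [show p + 1 + 1 = p + 2 from rfl] at this
        omega
      · have := pedge_dist hp'
        rw [show p + 1 + 1 = p + 2 from rfl] at this
        omega
    omega
  · -- q+3 ≤ ψ(p+1) : look at step p-1
    have hψp : ψ p = q + 2 := by omega
    have hm3 : ψ (p - 1) ≤ q ∨ ψ (p - 1) = q + 2 := by
      refine hlow _ (hψle _ (by omega)) ?_
      rw [hpres _ (by omega)]
      exact hQlo (p - 1) (by omega)
    have hd3 : ψ p = ψ (p - 1) + 1 ∨ ψ (p - 1) = ψ p + 1 := by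
      have he := hedge (p - 1) (by omega)
      rw [show p - 1 + 1 = p from by omega] at he
      rcases he with hp' | hp'
      · have := pedge_dist hp'; omega
      · have := pedge_dist hp'; omega
    omega

end PPAux
namespace PPAux
open List

variable {A : Type} [DecidableEq A] {k : ℕ} {R : Set (Fin k → A)}

/-- If one endpoint of a `dedge` is an inner vertex of `P_(a,r)`, then the edge is a
`pedge` of `P_(a,r)` between the respective positions. -/
lemma dedge_to_pedge {a : A} {r : Fin k → A} {w1 w2 : DVert R}
    (hd : dedge w1 w2)
    (hinn : (∃ hr' j h1 h2, w1 = DVert.inner a r hr' j h1 h2) ∨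
            (∃ hr' j h1 h2, w2 = DVert.inner a r hr' j h1 h2))
    {z1 z2 : ℕ} (h1 : isAt w1 a r z1) (h2 : isAt w2 a r z2) :
    pedge (qdirs (idxSet a r)) z1 z2 := by
  obtain ⟨a'', r'', hr'', x'', y'', hu, hv, hp⟩ := hd
  have haarr : a'' = a ∧ r'' = r := by
    rcases hinn with ⟨hr', j, ha1, hb1, rfl⟩ | ⟨hr', j, ha1, hb1, rfl⟩
    · obtain ⟨h1', h2', _⟩ := hu; exact ⟨h1'.symm, h2'.symm⟩
    · obtain ⟨h1', h2', _⟩ := hv; exact ⟨h1'.symm, h2'.symm⟩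
  obtain ⟨rfl, rfl⟩ := haarr
  rw [isAt_unique h1 hu, isAt_unique h2 hv]
  exact hp

/-- Extraction: a walk along `Q_{i}` from `base a` to `top r` gives a position walk
on the single connecting path `P_(a,r)`. -/
lemma extract {a : A} {r : Fin k → A} {hr : r ∈ R} {i : Fin k}
    (h : walkAlong (qdirs ({i} : Finset (Fin k))) (DVert.base a : DVert R) (DVert.top r hr)) :
    ∃ ψ : ℕ → ℕ, ψ 0 = 0 ∧
      ψ ((qdirs ({i} : Finset (Fin k))).length) = (qdirs (idxSet a r)).length ∧
      ∀ x < (qdirs ({i} : Finset (Fin k))).length,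
        ((qdirs ({i} : Finset (Fin k))).getD x false = true →
          pedge (qdirs (idxSet a r)) (ψ x) (ψ (x + 1))) ∧
        ((qdirs ({i} : Finset (Fin k))).getD x false = false →
          pedge (qdirs (idxSet a r)) (ψ (x + 1)) (ψ x)) := by
  obtain ⟨φ, hφ0, hφn, hstep⟩ := h
  set n := (qdirs ({i} : Finset (Fin k))).length with hndef
  have hn2 : 2 ≤ n := by
    rw [hndef, qdirs_length]
    have := le_pos (qbl_good ({i} : Finset (Fin k))) (l := k + 2) (by rw [qbl_length])
    omega
  -- levels along the walk
  have hlvl : ∀ x ≤ n, (lvlD (φ x) : ℤ) = phgt (qdirs ({i} : Finset (Fin k))) x := by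
    intro x hx
    have h2 := walk_lvl hstep x hx
    rw [hφ0] at h2
    simpa [lvlD] using h2
  -- interior vertices are inner
  have hint : ∀ x, 0 < x → x < n →
      ∃ a' r' hr' j h1 h2, φ x = DVert.inner a' r' hr' j h1 h2 := by
    intro x hx1 hx2
    have h1 := hlvl x (le_of_lt hx2)
    have hlo := one_le_phgt_qdirs ({i} : Finset (Fin k)) hx1 (le_of_lt hx2)
    have hhi := phgt_qdirs_le_k1 ({i} : Finset (Fin k)) hx2
    cases hv : φ x with
    | base a' => rw [hv] at h1; simp [lvlD] at h1; omega
    | top r' hr' => rw [hv] at h1; simp [lvlD] at h1; omega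
    | inner a' r' hr' j ha hb => exact ⟨a', r', hr', j, ha, hb, rfl⟩
  obtain ⟨a1, r1, hr1, j1, hj1a, hj1b, hφ1⟩ := hint 1 one_pos (by omega)
  -- edges of the walk, in one form or the other
  have hedge : ∀ x < n, dedge (φ x) (φ (x + 1)) ∨ dedge (φ (x + 1)) (φ x) := by
    intro x hx
    cases hb : (qdirs ({i} : Finset (Fin k))).getD x false with
    | true => exact Or.inl ((hstep x hx).1 hb)
    | false => exact Or.inr ((hstep x hx).2 hb)
  -- all interior vertices lie on the same connecting path
  have hsame : ∀ x, 0 < x → x < n → ∃ j h1 h2, φ x = DVert.inner a1 r1 hr1 j h1 h2 := by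
    intro x
    induction x with
    | zero => omega
    | succ x ih =>
      intro _ hx2
      rcases Nat.eq_zero_or_pos x with rfl | hxpos
      · exact ⟨j1, hj1a, hj1b, hφ1⟩
      · obtain ⟨j, hja, hjb, hφx⟩ := ih hxpos (by omega)
        obtain ⟨a2, r2, hr2, j', hja', hjb', hφx1⟩ := hint (x + 1) (by omega) hx2
        have key : a2 = a1 ∧ r2 = r1 := by
          rcases hedge x (by omega) with hd | hd
          · obtain ⟨a'', r'', hr'', x'', y'', hu, hv, _⟩ := hd
            rw [hφx] at hu; rw [hφx1] at hv
            obtain ⟨e1, e2, _⟩ := hu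
            obtain ⟨f1, f2, _⟩ := hv
            exact ⟨f1.trans e1.symm, f2.trans e2.symm⟩
          · obtain ⟨a'', r'', hr'', x'', y'', hu, hv, _⟩ := hd
            rw [hφx1] at hu; rw [hφx] at hv
            obtain ⟨e1, e2, _⟩ := hv
            obtain ⟨f1, f2, _⟩ := hu
            exact ⟨f1.trans e1.symm, f2.trans e2.symm⟩
        obtain ⟨rfl, rfl⟩ := key
        exact ⟨j', hja', hjb', hφx1⟩
  -- identify a1 = a  (via the first edge)
  have hQ0 : (qdirs ({i} : Finset (Fin k))).getD 0 false = true := qdirs_getD_zero _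
  have ha1 : a1 = a := by
    have hd := (hstep 0 (by omega)).1 hQ0
    obtain ⟨a'', r'', hr'', x'', y'', hu, hv, _⟩ := hd
    rw [hφ0] at hu; rw [hφ1] at hv
    exact hv.1.trans hu.1.symm
  -- identify r1 = r  (via the last edge)
  have hlastpos : n - 1 = pos (qbl ({i} : Finset (Fin k))) (k + 1) := by
    have := qdirs_length_pos_succ ({i} : Finset (Fin k))
    omega
  have hQlast : (qdirs ({i} : Finset (Fin k))).getD (n - 1) false = true := by
    rw [hlastpos]; exact qdirs_getD_last _
  obtain ⟨j2, hj2a, hj2b, hφn1⟩ := hsame (n - 1) (by omega) (by omega)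
  have hr1r : r1 = r := by
    have hd := (hstep (n - 1) (by omega)).1 hQlast
    rw [show n - 1 + 1 = n from by omega] at hd
    obtain ⟨a'', r'', hr'', x'', y'', hu, hv, _⟩ := hd
    rw [hφn1] at hu; rw [hφn] at hv
    exact hu.2.1.trans hv.1.symm
  subst ha1; subst hr1r
  -- the position function
  refine ⟨fun x => match φ x with
    | DVert.base _ => 0
    | DVert.top _ _ => plen a1 r1
    | DVert.inner _ _ _ j _ _ => j, by simp [hφ0], by simp [hφn, plen], ?_⟩
  have hisAt : ∀ x ≤ n, isAt (φ x) a1 r1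
      (match φ x with
        | DVert.base _ => 0
        | DVert.top _ _ => plen a1 r1
        | DVert.inner _ _ _ j _ _ => j) := by
    intro x hx
    rcases Nat.eq_zero_or_pos x with rfl | hxpos
    · simp [hφ0, isAt]
    · rcases eq_or_lt_of_le hx with rfl | hx'
      · simp [hφn, isAt]
      · obtain ⟨j, hja, hjb, hφx⟩ := hsame x hxpos hx'
        simp [hφx, isAt]
  intro x hx
  have hinn : (∃ hr' j h1 h2, φ x = DVert.inner a1 r1 hr' j h1 h2) ∨
      (∃ hr' j h1 h2, φ (x + 1) = DVert.inner a1 r1 hr' j h1 h2) := by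
    rcases Nat.eq_zero_or_pos x with rfl | hxpos
    · obtain ⟨j, hja, hjb, hφx⟩ := hsame 1 one_pos (by omega)
      exact Or.inr ⟨hr1, j, hja, hjb, hφx⟩
    · obtain ⟨j, hja, hjb, hφx⟩ := hsame x hxpos (by omega)
      exact Or.inl ⟨hr1, j, hja, hjb, hφx⟩
  constructor
  · intro hb
    exact dedge_to_pedge ((hstep x hx).1 hb) hinn (hisAt x (by omega)) (hisAt (x+1) (by omega))
  · intro hb
    exact dedge_to_pedge ((hstep x hx).2 hb) (hinn.symm) (hisAt (x+1) (by omega)) (hisAt x (by omega))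

end PPAux

/-- In `D(A)`: there is a homomorphism from `Q = Q_∅` into the connecting path
`P_(a,r)` (from `a` to `r`); there is one from `Q_{i}` iff `a = rᵢ`; consequently
`A` is pp-defined by `{x : ∃ y, x →^Q y}` and `R` by
`{(x₁,...,x_k) : ∃ y, ∀ i, xᵢ →^{Q_{i}} y}`. -/
theorem D_pp_defines_A_and_R {A : Type} [DecidableEq A] {k : ℕ}
    (R : Set (Fin k → A)) (hR : R.Nonempty) :
    (∀ (a : A) (r : Fin k → A) (hr : r ∈ R),
      walkAlong (qdirs (∅ : Finset (Fin k)))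
        (DVert.base a : DVert R) (DVert.top r hr)) ∧
    (∀ (a : A) (r : Fin k → A) (hr : r ∈ R) (i : Fin k),
      walkAlong (qdirs ({i} : Finset (Fin k)))
        (DVert.base a : DVert R) (DVert.top r hr) ↔ a = r i) ∧
    (∀ v : DVert R,
      (∃ w, walkAlong (qdirs (∅ : Finset (Fin k))) v w) ↔ ∃ a, v = DVert.base a) ∧
    (∀ t : Fin k → DVert R,
      (∃ w, ∀ i, walkAlong (qdirs ({i} : Finset (Fin k))) (t i) w) ↔
      ∃ r, ∃ _ : r ∈ R, ∀ i, t i = DVert.base (r i)) := by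
  have mem_idx : ∀ (a : A) (r : Fin k → A) (i : Fin k), i ∈ idxSet a r ↔ a = r i := by
    intro a r i; simp [idxSet]
  have part1 : ∀ (a : A) (r : Fin k → A) (hr : r ∈ R),
      walkAlong (qdirs (∅ : Finset (Fin k))) (DVert.base a : DVert R) (DVert.top r hr) :=
    fun a r hr => PPAux.build hr (Finset.empty_subset _)
  have part2 : ∀ (a : A) (r : Fin k → A) (hr : r ∈ R) (i : Fin k),
      walkAlong (qdirs ({i} : Finset (Fin k))) (DVert.base a : DVert R) (DVert.top r hr)
        ↔ a = r i := by
    intro a r hr i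
    constructor
    · intro hw
      by_contra hne
      have hiJ : i ∉ idxSet a r := by simp [idxSet, hne]
      obtain ⟨ψ, h0, hend, hst⟩ := PPAux.extract hw
      exact PPAux.cut hiJ h0 hend hst
    · intro he
      exact PPAux.build hr (by simp [Finset.singleton_subset_iff, mem_idx, he])
  refine ⟨part1, part2, ?_, ?_⟩
  · intro v
    constructor
    · rintro ⟨w, hw⟩
      have hl := PPAux.walkAlong_lvl hw
      rw [PPAux.phgt_qdirs_length] at hl
      have h1 := PPAux.lvlD_le w
      have h0 : lvlD v = 0 := by omega
      exact PPAux.lvlD_eq_zero h0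
    · rintro ⟨a, rfl⟩
      obtain ⟨r, hrR⟩ := hR
      exact ⟨_, part1 a r hrR⟩
  · intro t
    constructor
    · rintro ⟨w, hw⟩
      rcases Nat.eq_zero_or_pos k with hk | hk
      · obtain ⟨r, hrR⟩ := hR
        exact ⟨r, hrR, fun i => absurd i.isLt (by omega)⟩
      · set i0 : Fin k := ⟨0, hk⟩
        have hl0 := PPAux.walkAlong_lvl (hw i0)
        rw [PPAux.phgt_qdirs_length] at hl0
        have hle := PPAux.lvlD_le w
        have hlew : lvlD w = k + 2 := by omega
        obtain ⟨r, hrR, rfl⟩ := PPAux.lvlD_eq_top hlew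
        refine ⟨r, hrR, fun i => ?_⟩
        have hli := PPAux.walkAlong_lvl (hw i)
        rw [PPAux.phgt_qdirs_length] at hli
        have hti : lvlD (t i) = 0 := by omega
        obtain ⟨ai, hai⟩ := PPAux.lvlD_eq_zero hti
        have hair : ai = r i := (part2 ai r hrR i).1 (by rw [← hai]; exact hw i)
        rw [hai, hair]
    · rintro ⟨r, hrR, ht⟩
      refine ⟨DVert.top r hrR, fun i => ?_⟩
      rw [ht i]
      exact (part2 (r i) r hrR i).2 rfl
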